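/- Let {(x_i, y_i)}_{i∈I} ⊂ H × H satisfy ‖y_i − y_j‖ ≤ ‖x_i − x_j‖ for all i, j ∈ I, suppose there is a distinguished index ⋆ ∈ I with v := x_⋆ − y_⋆ and ⟨x_i − y_i, v⟩ ≥ ‖v‖² for all i ∈ I. Then there exists a nonexpansive operator T̃ : H → H with T̃ x_i = y_i for all i ∈ I whose infimal displacement vector equals v. -/

import Mathlib

set_option maxHeartbeats 1000000
set_option linter.unusedSectionVars false

open scoped RealInnerProductSpace

noncomputable section

namespace NExtAux

variable {σ : Type*} {H : Type*} [NormedAddCommGroup H] [InnerProductSpace ℝ H]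

/-- A finitely supported convex-combination "representation" over `σ`. -/
structure Rep (σ : Type*) where
  n : ℕ
  ix : Fin n → σ
  w : Fin n → ℝ
  nonneg : ∀ i, 0 ≤ w i
  sum_one : ∑ i, w i = 1

variable {E : Type*} [AddCommGroup E] [Module ℝ E]

def Rep.comb (c : Rep σ) (f : σ → E) : E := ∑ i, c.w i • f (c.ix i)

lemma Rep.comb_const (c : Rep σ) (e : E) : c.comb (fun _ => e) = e := by
  rw [Rep.comb, ← Finset.sum_smul, c.sum_one, one_smul]

lemma Rep.comb_add (c : Rep σ) (f g : σ → E) :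
    c.comb (fun s => f s + g s) = c.comb f + c.comb g := by
  simp [Rep.comb, smul_add, Finset.sum_add_distrib]

lemma Rep.comb_sub (c : Rep σ) (f g : σ → E) :
    c.comb (fun s => f s - g s) = c.comb f - c.comb g := by
  simp [Rep.comb, smul_sub, Finset.sum_sub_distrib]

lemma Rep.comb_mul_left (c : Rep σ) (r : ℝ) (f : σ → ℝ) :
    c.comb (fun s => r * f s) = r * c.comb f := by
  simp [Rep.comb, Finset.mul_sum]; congr 1; ext i; ring

lemma Rep.comb_inner (c : Rep σ) (u : H) (f : σ → H) :
    c.comb (fun s => ⟪u, f s⟫) = ⟪u, c.comb f⟫ := by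
  simp [Rep.comb, inner_sum, real_inner_smul_right]

lemma Rep.comb_le_comb (c : Rep σ) {f g : σ → ℝ} (h : ∀ s, f s ≤ g s) :
    c.comb f ≤ c.comb g := by
  refine Finset.sum_le_sum fun i _ => ?_
  have := c.nonneg i
  simpa [smul_eq_mul] using mul_le_mul_of_nonneg_left (h (c.ix i)) this

lemma Rep.comb_mem {K : Set E} (hK : Convex ℝ K) (c : Rep σ) {f : σ → E}
    (hf : ∀ s, f s ∈ K) : c.comb f ∈ K :=
  hK.sum_mem (fun i _ => c.nonneg i) c.sum_one (fun i _ => hf (c.ix i))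

def Rep.single (s : σ) : Rep σ :=
  ⟨1, fun _ => s, fun _ => 1, fun _ => zero_le_one, by simp⟩

@[simp] lemma Rep.comb_single (s : σ) (f : σ → E) : (Rep.single s).comb f = f s := by
  simp [Rep.comb, Rep.single]
  erw [Finset.card_univ, Fintype.card_fin, one_smul]

def Rep.mix (t : ℝ) (h0 : 0 ≤ t) (h1 : t ≤ 1) (c d : Rep σ) : Rep σ where
  n := c.n + d.n
  ix := Fin.append c.ix d.ix
  w := Fin.append (fun i => (1 - t) * c.w i) (fun i => t * d.w i)
  nonneg := by
    intro i
    refine Fin.addCases (fun j => ?_) (fun j => ?_) i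
    · rw [Fin.append_left]; exact mul_nonneg (by linarith) (c.nonneg j)
    · rw [Fin.append_right]; exact mul_nonneg h0 (d.nonneg j)
  sum_one := by
    rw [Fin.sum_univ_add]
    simp only [Fin.append_left, Fin.append_right, ← Finset.mul_sum, c.sum_one, d.sum_one]
    ring

lemma Rep.comb_mix (t : ℝ) (h0 : 0 ≤ t) (h1 : t ≤ 1) (c d : Rep σ) (f : σ → E) :
    (c.mix t h0 h1 d).comb f = (1 - t) • c.comb f + t • d.comb f := by
  simp only [Rep.comb, Rep.mix]
  erw [Fin.sum_univ_add]
  simp only [Fin.append_left, Fin.append_right, mul_smul, ← Finset.smul_sum]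

lemma Rep.comb_inner_left (c : Rep σ) (u : H) (f : σ → H) :
    c.comb (fun s => ⟪f s, u⟫) = ⟪c.comb f, u⟫ := by
  rw [real_inner_comm, ← Rep.comb_inner]
  simp [real_inner_comm]

lemma Rep.comb_normsq_center (c : Rep σ) (f : σ → H) (p : H) :
    c.comb (fun s => ‖p - f s‖ ^ 2)
      = c.comb (fun s => ‖f s‖ ^ 2) - 2 * ⟪p, c.comb f⟫ + ‖p‖ ^ 2 := by
  have h1 : (fun s => ‖p - f s‖ ^ 2)
      = fun s => (‖f s‖ ^ 2 + (-2) * ⟪p, f s⟫) + ‖p‖ ^ 2 := by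
    funext s; rw [norm_sub_sq_real]; ring
  rw [h1, Rep.comb_add, Rep.comb_add, Rep.comb_const, Rep.comb_mul_left, Rep.comb_inner]
  ring

lemma Rep.comb_variance (c : Rep σ) (f : σ → H) :
    c.comb (fun s => ‖c.comb f - f s‖ ^ 2)
      = c.comb (fun s => ‖f s‖ ^ 2) - ‖c.comb f‖ ^ 2 := by
  rw [Rep.comb_normsq_center, ← real_inner_self_eq_norm_sq (c.comb f)]
  ring

lemma Rep.comb_double (c : Rep σ) (f : σ → H) :
    c.comb (fun t => c.comb (fun s => ‖f t - f s‖ ^ 2))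
      = 2 * (c.comb (fun s => ‖f s‖ ^ 2) - ‖c.comb f‖ ^ 2) := by
  have h1 : (fun t => c.comb (fun s => ‖f t - f s‖ ^ 2))
      = fun t => (c.comb (fun s => ‖f s‖ ^ 2) + ‖f t‖ ^ 2) + (-2) * ⟪f t, c.comb f⟫ := by
    funext t; rw [Rep.comb_normsq_center]; ring
  rw [h1, Rep.comb_add, Rep.comb_add, Rep.comb_const, Rep.comb_mul_left,
    Rep.comb_inner_left, real_inner_self_eq_norm_sq]
  ring

lemma Rep.comb_variance_mono (c : Rep σ) {f g : σ → H}
    (hfg : ∀ s t, ‖f s - f t‖ ≤ ‖g s - g t‖) :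
    c.comb (fun s => ‖c.comb f - f s‖ ^ 2)
      ≤ c.comb (fun s => ‖c.comb g - g s‖ ^ 2) := by
  have hQ : c.comb (fun t => c.comb (fun s => ‖f t - f s‖ ^ 2))
      ≤ c.comb (fun t => c.comb (fun s => ‖g t - g s‖ ^ 2)) := by
    refine c.comb_le_comb fun t => c.comb_le_comb fun s => ?_
    exact pow_le_pow_left₀ (norm_nonneg _) (hfg t s) 2
  rw [Rep.comb_double, Rep.comb_double] at hQ
  rw [Rep.comb_variance, Rep.comb_variance]
  linarith

lemma Rep.comb_smul (c : Rep σ) (r : ℝ) (f : σ → E) :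
    c.comb (fun s => r • f s) = r • c.comb f := by
  rw [Rep.comb, Rep.comb, Finset.smul_sum]
  exact Finset.sum_congr rfl fun i _ => smul_comm _ _ _

/-! ### Generic inner-product identities -/

private lemma quarter_id (y b z a : H) : ‖y - b‖ ^ 2 - ⟪z - a, y - b⟫
    = 4⁻¹ * (‖((2:ℝ) • y - z) - ((2:ℝ) • b - a)‖ ^ 2 - ‖z - a‖ ^ 2) := by
  simp only [← real_inner_self_eq_norm_sq, inner_sub_left, inner_sub_right,
    real_inner_smul_left, real_inner_smul_right, real_inner_comm]
  ring

private lemma diff_id (y y' b a z : H) :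
    (‖y - b‖ ^ 2 - ⟪z - a, y - b⟫) - (‖y' - b‖ ^ 2 - ⟪z - a, y' - b⟫)
      = (‖y‖ ^ 2 - ‖y'‖ ^ 2) - ⟪y - y', (2:ℝ) • b + (z - a)⟫ := by
  simp only [← real_inner_self_eq_norm_sq, inner_sub_left, inner_sub_right, inner_add_right,
    real_inner_smul_left, real_inner_smul_right, real_inner_comm]
  ring

private lemma msq_id (y y' m : H) :
    (‖y‖ ^ 2 - ‖y'‖ ^ 2) - ⟪y - y', (2:ℝ) • m⟫ = ‖y - m‖ ^ 2 - ‖y' - m‖ ^ 2 := by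
  simp only [← real_inner_self_eq_norm_sq, inner_sub_left, inner_sub_right,
    real_inner_smul_left, real_inner_smul_right, real_inner_comm]
  ring

private lemma nexp_sq (u v : H) (h : ‖u‖ ^ 2 ≤ ⟪v, u⟫) :
    ‖(2:ℝ) • u - v‖ ≤ ‖v‖ := by
  have e1 : ‖(2:ℝ) • u - v‖ ^ 2 = 4 * ‖u‖ ^ 2 - 4 * ⟪v, u⟫ + ‖v‖ ^ 2 := by
    simp only [← real_inner_self_eq_norm_sq, inner_sub_left, inner_sub_right,
      real_inner_smul_left, real_inner_smul_right, real_inner_comm]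
    ring
  nlinarith [norm_nonneg ((2:ℝ) • u - v), norm_nonneg v]

/-! ### The objective function and its properties -/

variable [CompleteSpace H]

def hval (a b : σ → H) (z : H) (s : σ) (y : H) : ℝ := ‖y - b s‖ ^ 2 - ⟪z - a s, y - b s⟫

def Sval (a b : σ → H) (z : H) (c : Rep σ) (y : H) : ℝ := c.comb fun s => hval a b z s y

def mval (a b : σ → H) (z : H) (c : Rep σ) : H := c.comb b + (2⁻¹ : ℝ) • (z - c.comb a)

omit [CompleteSpace H] in
lemma two_mval (a b : σ → H) (z : H) (c : Rep σ) :
    (2:ℝ) • mval a b z c = (2:ℝ) • c.comb b + (z - c.comb a) := by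
  rw [mval]; module

lemma Sdiff (a b : σ → H) (z : H) (c : Rep σ) (y y' : H) :
    Sval a b z c y - Sval a b z c y'
      = ‖y - mval a b z c‖ ^ 2 - ‖y' - mval a b z c‖ ^ 2 := by
  have h1 : Sval a b z c y - Sval a b z c y'
      = c.comb (fun s => hval a b z s y - hval a b z s y') := (c.comb_sub _ _).symm
  have h2 : (fun s => hval a b z s y - hval a b z s y')
      = fun s => (‖y‖ ^ 2 - ‖y'‖ ^ 2) - ⟪y - y', (2:ℝ) • b s + (z - a s)⟫ := by
    funext s; exact diff_id y y' (b s) (a s) z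
  have h3 : c.comb (fun s => (2:ℝ) • b s + (z - a s))
      = (2:ℝ) • mval a b z c := by
    have := c.comb_add (fun s => (2:ℝ) • b s) (fun s => z - a s)
    rw [this, c.comb_smul, c.comb_sub, c.comb_const, two_mval]
  rw [h1, h2, Rep.comb_sub, Rep.comb_const, Rep.comb_inner, h3, msq_id]

lemma Ebound (a b : σ → H) (z : H)
    (hfirm : ∀ s t, ‖b s - b t‖ ^ 2 ≤ ⟪a s - a t, b s - b t⟫) (c : Rep σ) :
    Sval a b z c (mval a b z c) ≤ -(4⁻¹ * ‖z - c.comb a‖ ^ 2) := by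
  set n : σ → H := fun s => (2:ℝ) • b s - a s with hn_def
  have hn : ∀ s t, ‖n s - n t‖ ≤ ‖a s - a t‖ := by
    intro s t
    have hveq : n s - n t = (2:ℝ) • (b s - b t) - (a s - a t) := by
      simp only [hn_def]; module
    rw [hveq]
    exact nexp_sq _ _ (hfirm s t)
  have hN : (2:ℝ) • mval a b z c - z = c.comb n := by
    have hc : c.comb n = (2:ℝ) • c.comb b - c.comb a := by
      rw [show c.comb n = c.comb (fun s => (2:ℝ) • b s) - c.comb a from c.comb_sub _ _,
        c.comb_smul]
    rw [hc, two_mval]; module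
  have key : (fun s => hval a b z s (mval a b z c))
      = fun s => 4⁻¹ * (‖c.comb n - n s‖ ^ 2 - ‖z - a s‖ ^ 2) := by
    funext s
    rw [hval, quarter_id, ← hN]
  have hS : Sval a b z c (mval a b z c)
      = 4⁻¹ * (c.comb (fun s => ‖c.comb n - n s‖ ^ 2) - c.comb (fun s => ‖z - a s‖ ^ 2)) := by
    rw [Sval, key]
    rw [show (fun s => 4⁻¹ * (‖c.comb n - n s‖ ^ 2 - ‖z - a s‖ ^ 2))
        = fun s => 4⁻¹ * ((fun s => ‖c.comb n - n s‖ ^ 2 - ‖z - a s‖ ^ 2) s) from rfl,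
      c.comb_mul_left, c.comb_sub]
  have v1 : c.comb (fun s => ‖c.comb n - n s‖ ^ 2) ≤ c.comb (fun s => ‖c.comb a - a s‖ ^ 2) :=
    c.comb_variance_mono hn
  have v2 : c.comb (fun s => ‖z - a s‖ ^ 2)
      = c.comb (fun s => ‖c.comb a - a s‖ ^ 2) + ‖z - c.comb a‖ ^ 2 := by
    rw [Rep.comb_normsq_center, Rep.comb_variance, norm_sub_sq_real]
    ring
  rw [hS, v2]
  nlinarith [v1]

private lemma pyth_id (p u cc : H) :
    ‖cc - u‖ ^ 2 = ‖cc - p‖ ^ 2 - 2 * ⟪u - p, cc - p⟫ + ‖p - u‖ ^ 2 := by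
  simp only [← real_inner_self_eq_norm_sq, inner_sub_left, inner_sub_right, real_inner_comm]
  ring

private lemma sq_dist_tri (u v w : H) : ‖v - w‖ ^ 2 ≤ 2 * ‖u - v‖ ^ 2 + 2 * ‖u - w‖ ^ 2 := by
  have h1 : ‖v - w‖ ≤ ‖u - v‖ + ‖u - w‖ := by
    have := norm_sub_le_norm_sub_add_norm_sub v u w
    rwa [norm_sub_rev v u] at this
  have h2 : ‖v - w‖ ^ 2 ≤ (‖u - v‖ + ‖u - w‖) ^ 2 := by
    nlinarith [norm_nonneg (v - w)]
  nlinarith [sq_nonneg (‖u - v‖ - ‖u - w‖)]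

/-- The constrained one-point extension lemma. -/
theorem onePoint [Nonempty σ] (a b : σ → H) (z : H)
    (K : Set H) (hKc : IsClosed K) (hKconv : Convex ℝ K)
    (hbK : ∀ s, b s ∈ K)
    (hfirm : ∀ s t, ‖b s - b t‖ ^ 2 ≤ ⟪a s - a t, b s - b t⟫) :
    ∃ y ∈ K, ∀ s, ‖y - b s‖ ^ 2 ≤ ⟪z - a s, y - b s⟫ := by
  classical
  have hKne : K.Nonempty := ⟨b (Classical.arbitrary σ), hbK _⟩
  -- the metric projection onto K
  have hproj : ∀ u : H, ∃ p, p ∈ K ∧ ∀ c ∈ K, ⟪u - p, c - p⟫ ≤ 0 := by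
    intro u
    obtain ⟨p, hpK, hmin⟩ :=
      exists_norm_eq_iInf_of_complete_convex hKne hKc.isComplete hKconv u
    exact ⟨p, hpK, (norm_eq_iInf_iff_real_inner_le_zero hKconv hpK).1 hmin⟩
  choose P hPK hPvi using hproj
  have pyth : ∀ (u : H) (cc : H), cc ∈ K →
      ‖cc - P u‖ ^ 2 + ‖P u - u‖ ^ 2 ≤ ‖cc - u‖ ^ 2 := by
    intro u cc hcc
    have h := hPvi u cc hcc
    have e := pyth_id (P u) u cc
    linarith
  -- the value function
  have SVI : ∀ (c : Rep σ) (cc : H), cc ∈ K →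
      Sval a b z c (P (mval a b z c)) + ‖cc - P (mval a b z c)‖ ^ 2 ≤ Sval a b z c cc := by
    intro c cc hcc
    have h1 := Sdiff a b z c cc (P (mval a b z c))
    have h2 := pyth (mval a b z c) cc hcc
    linarith
  have hg0 : ∀ c : Rep σ, Sval a b z c (P (mval a b z c)) ≤ 0 := by
    intro c
    have h1 := Sdiff a b z c (P (mval a b z c)) (mval a b z c)
    have h2 := Ebound a b z hfirm c
    have h4 := pyth (mval a b z c) (c.comb b) (c.comb_mem hKconv hbK)
    have h5 : ‖c.comb b - mval a b z c‖ ^ 2 = 4⁻¹ * ‖z - c.comb a‖ ^ 2 := by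
      rw [show c.comb b - mval a b z c = -((2⁻¹:ℝ) • (z - c.comb a)) by rw [mval]; module,
        norm_neg, norm_smul]
      simp [Real.norm_eq_abs]
      ring
    have h6 : ‖mval a b z c - mval a b z c‖ ^ 2 = 0 := by simp
    nlinarith [sq_nonneg ‖c.comb b - P (mval a b z c)‖]
  set M := sSup (Set.range fun c : Rep σ => Sval a b z c (P (mval a b z c))) with hM
  have hrne : (Set.range fun c : Rep σ => Sval a b z c (P (mval a b z c))).Nonempty :=
    ⟨_, ⟨Rep.single (Classical.arbitrary σ), rfl⟩⟩
  have hbdd : BddAbove (Set.range fun c : Rep σ => Sval a b z c (P (mval a b z c))) :=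
    ⟨0, by rintro _ ⟨c, rfl⟩; exact hg0 c⟩
  have hMle : M ≤ 0 := csSup_le hrne (by rintro _ ⟨c, rfl⟩; exact hg0 c)
  have hgM : ∀ c : Rep σ, Sval a b z c (P (mval a b z c)) ≤ M :=
    fun c => le_csSup hbdd ⟨c, rfl⟩
  -- two near-maximizers have nearby projections
  have claimA : ∀ (e : ℝ) (c d : Rep σ),
      M - e ≤ Sval a b z c (P (mval a b z c)) →
      M - e ≤ Sval a b z d (P (mval a b z d)) →
      ‖P (mval a b z c) - P (mval a b z d)‖ ^ 2 ≤ 4 * e := by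
    intro e c d hc hd
    set ν := c.mix 2⁻¹ (by norm_num) (by norm_num) d with hν
    have hmixS : ∀ y : H, Sval a b z ν y
        = (1 - 2⁻¹) * Sval a b z c y + 2⁻¹ * Sval a b z d y := by
      intro y
      rw [Sval, hν, Rep.comb_mix]
      simp [smul_eq_mul, Sval]
    have h1 := SVI c (P (mval a b z ν)) (hPK _)
    have h2 := SVI d (P (mval a b z ν)) (hPK _)
    have h3 := hgM ν
    have h4 := sq_dist_tri (P (mval a b z ν)) (P (mval a b z c)) (P (mval a b z d))
    have h5 := hmixS (P (mval a b z ν))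
    linarith
  -- a maximizing sequence
  have choice : ∀ k : ℕ, ∃ c : Rep σ,
      M - (((k:ℝ) + 1)⁻¹) ^ 2 < Sval a b z c (P (mval a b z c)) := by
    intro k
    have hlt : M - (((k:ℝ) + 1)⁻¹) ^ 2 < M := by
      have : (0:ℝ) < (((k:ℝ) + 1)⁻¹) ^ 2 := by positivity
      linarith
    obtain ⟨_, ⟨c, rfl⟩, hc⟩ := exists_lt_of_lt_csSup hrne hlt
    exact ⟨c, hc⟩
  choose cs hcs using choice
  have htle1 : ∀ k : ℕ, (((k:ℝ) + 1)⁻¹) ≤ 1 := by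
    intro k
    rw [inv_le_one_iff₀]
    right; linarith [Nat.cast_nonneg (α := ℝ) k]
  have htpos : ∀ k : ℕ, (0:ℝ) < (((k:ℝ) + 1)⁻¹) := by intro k; positivity
  -- near-maximizers at level N for all k ≥ N
  have hnear : ∀ N k : ℕ, N ≤ k →
      M - (((N:ℝ) + 1)⁻¹) ^ 2 ≤ Sval a b z (cs k) (P (mval a b z (cs k))) := by
    intro N k hNk
    have h1 : (((k:ℝ) + 1)⁻¹) ≤ (((N:ℝ) + 1)⁻¹) := by
      apply inv_anti₀ (by positivity)
      have : (N:ℝ) ≤ (k:ℝ) := Nat.cast_le.2 hNk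
      linarith
    have h2 : (((k:ℝ) + 1)⁻¹) ^ 2 ≤ (((N:ℝ) + 1)⁻¹) ^ 2 := by
      apply pow_le_pow_left₀ (le_of_lt (htpos k)) h1
    linarith [hcs k]
  have hcauchy : CauchySeq (fun k => P (mval a b z (cs k))) := by
    apply cauchySeq_of_le_tendsto_0 (fun N : ℕ => 2 * (((N:ℝ) + 1)⁻¹))
    · intro k l N hk hl
      have hA := claimA ((((N:ℝ) + 1)⁻¹) ^ 2) (cs k) (cs l) (hnear N k hk) (hnear N l hl)
      rw [dist_eq_norm]
      nlinarith [norm_nonneg (P (mval a b z (cs k)) - P (mval a b z (cs l))), htpos N]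
    · have h0 : Filter.Tendsto (fun N : ℕ => (((N:ℝ) + 1)⁻¹)) Filter.atTop (nhds 0) := by
        simpa [one_div] using tendsto_one_div_add_atTop_nhds_zero_nat (𝕜 := ℝ)
      simpa using h0.const_mul 2
  obtain ⟨yh, hyh⟩ := cauchySeq_tendsto_of_complete hcauchy
  have hyhK : yh ∈ K := hKc.mem_of_tendsto hyh (Filter.Eventually.of_forall fun k => hPK _)
  refine ⟨yh, hyhK, fun s => ?_⟩
  -- final: pass to the limit along mixed representations
  set D := M - Sval a b z (Rep.single s) (P (mval a b z (Rep.single s))) with hD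
  have hDnn : 0 ≤ D := by
    have := hgM (Rep.single s)
    simp only [hD]
    linarith
  set ν : ℕ → Rep σ := fun k =>
    (cs k).mix (((k:ℝ) + 1)⁻¹) (le_of_lt (htpos k)) (htle1 k) (Rep.single s) with hνdef
  have hmixS : ∀ (k : ℕ) (y : H), Sval a b z (ν k) y
      = (1 - (((k:ℝ) + 1)⁻¹)) * Sval a b z (cs k) y + (((k:ℝ) + 1)⁻¹) * hval a b z s y := by
    intro k y
    rw [Sval, hνdef, Rep.comb_mix]
    simp [smul_eq_mul, Sval]
  -- the key upper bound on hval at the mixed projections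
  have hup : ∀ k : ℕ, hval a b z s (P (mval a b z (ν k))) ≤ M + (((k:ℝ) + 1)⁻¹) := by
    intro k
    set t := (((k:ℝ) + 1)⁻¹) with ht
    have h1 := SVI (cs k) (P (mval a b z (ν k))) (hPK _)
    have h2 := hgM (ν k)
    have h3 := hmixS k (P (mval a b z (ν k)))
    have h4 := hcs k
    have h5 : M - t ^ 2 ≤ Sval a b z (cs k) (P (mval a b z (ν k))) := by
      have h6 := sq_nonneg ‖P (mval a b z (ν k)) - P (mval a b z (cs k))‖
      linarith
    have htp := htpos k
    have htl := htle1 k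
    -- M ≥ (1-t)(M - t²) + t * hval  ⟹  hval ≤ M + (1-t) t ≤ M + t
    have hMv : M ≥ (1 - t) * (M - t ^ 2) + t * hval a b z s (P (mval a b z (ν k))) := by
      calc M ≥ Sval a b z (ν k) (P (mval a b z (ν k))) := h2
        _ = (1 - t) * Sval a b z (cs k) (P (mval a b z (ν k)))
            + t * hval a b z s (P (mval a b z (ν k))) := h3
        _ ≥ (1 - t) * (M - t ^ 2) + t * hval a b z s (P (mval a b z (ν k))) := by
            have : (0:ℝ) ≤ 1 - t := by linarith
            nlinarith [h5]
    have expand : t * hval a b z s (P (mval a b z (ν k))) ≤ t * M + (1 - t) * t ^ 2 := by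
      nlinarith [hMv]
    have hb : t * hval a b z s (P (mval a b z (ν k))) ≤ t * (M + t) := by
      nlinarith [expand]
    exact (mul_le_mul_iff_right₀ htp).1 hb
  -- the mixed representation is a near-maximizer, so its projection is near P(m(cs k))
  have hclose : ∀ k : ℕ,
      ‖P (mval a b z (ν k)) - P (mval a b z (cs k))‖ ^ 2
        ≤ 4 * ((((k:ℝ) + 1)⁻¹) ^ 2 + (((k:ℝ) + 1)⁻¹) * D) := by
    intro k
    set t := (((k:ℝ) + 1)⁻¹) with ht
    have htp := htpos k
    have htl := htle1 k
    -- lower bound for g (ν k)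
    have h1 := SVI (cs k) (P (mval a b z (ν k))) (hPK _)
    have h1' : M - t ^ 2 ≤ Sval a b z (cs k) (P (mval a b z (ν k))) := by
      have h6 := sq_nonneg ‖P (mval a b z (ν k)) - P (mval a b z (cs k))‖
      linarith [hcs k]
    have h2 := SVI (Rep.single s) (P (mval a b z (ν k))) (hPK _)
    have h2' : M - D ≤ Sval a b z (Rep.single s) (P (mval a b z (ν k))) := by
      have h6 := sq_nonneg ‖P (mval a b z (ν k)) - P (mval a b z (Rep.single s))‖
      simp only [hD] at *
      linarith
    have h3 := hmixS k (P (mval a b z (ν k)))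
    have hSsingle : Sval a b z (Rep.single s) (P (mval a b z (ν k)))
        = hval a b z s (P (mval a b z (ν k))) := by
      rw [Sval, Rep.comb_single]
    have hgν : M - (t ^ 2 + t * D) ≤ Sval a b z (ν k) (P (mval a b z (ν k))) := by
      have hvi := SVI (ν k) (P (mval a b z (ν k))) (hPK _)
      have : Sval a b z (ν k) (P (mval a b z (ν k)))
          ≥ (1 - t) * (M - t ^ 2) + t * (M - D) := by
        rw [h3]
        have hnn : (0:ℝ) ≤ 1 - t := by linarith
        have := h2'
        rw [hSsingle] at this
        nlinarith [h1']
      nlinarith [this]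
    have htD : 0 ≤ t * D := mul_nonneg (le_of_lt htp) hDnn
    have hcsk : M - (t ^ 2 + t * D) ≤ Sval a b z (cs k) (P (mval a b z (cs k))) := by
      linarith [hcs k, sq_nonneg t]
    exact claimA (t ^ 2 + t * D) (ν k) (cs k) hgν hcsk
  -- pass to the limit
  have hulim : Filter.Tendsto (fun k => P (mval a b z (ν k))) Filter.atTop (nhds yh) := by
    rw [tendsto_iff_dist_tendsto_zero]
    have hb1 : ∀ k : ℕ, dist (P (mval a b z (ν k))) yh
        ≤ 2 * Real.sqrt ((((k:ℝ) + 1)⁻¹) * (1 + D)) + dist (P (mval a b z (cs k))) yh := by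
      intro k
      have htri := dist_triangle (P (mval a b z (ν k))) (P (mval a b z (cs k))) yh
      have hc := hclose k
      set t := (((k:ℝ) + 1)⁻¹) with ht
      have htp := htpos k
      have htl := htle1 k
      have hsq : ‖P (mval a b z (ν k)) - P (mval a b z (cs k))‖ ^ 2 ≤ 4 * (t * (1 + D)) := by
        nlinarith [hc, mul_nonneg (le_of_lt htp) hDnn]
      have hsqrt : ‖P (mval a b z (ν k)) - P (mval a b z (cs k))‖
          ≤ 2 * Real.sqrt (t * (1 + D)) := by
        have hnn : (0:ℝ) ≤ t * (1 + D) := by nlinarith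
        have h7 := Real.sq_sqrt hnn
        nlinarith [Real.sqrt_nonneg (t * (1 + D)),
          norm_nonneg (P (mval a b z (ν k)) - P (mval a b z (cs k)))]
      rw [dist_eq_norm] at htri ⊢
      rw [dist_eq_norm] at htri
      linarith [htri, hsqrt]
    have hb2 : Filter.Tendsto
        (fun k : ℕ => 2 * Real.sqrt ((((k:ℝ) + 1)⁻¹) * (1 + D))
          + dist (P (mval a b z (cs k))) yh) Filter.atTop (nhds 0) := by
      have ht0 : Filter.Tendsto (fun k : ℕ => (((k:ℝ) + 1)⁻¹) * (1 + D))
          Filter.atTop (nhds 0) := by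
        have h0 : Filter.Tendsto (fun N : ℕ => (((N:ℝ) + 1)⁻¹)) Filter.atTop (nhds 0) := by
          simpa [one_div] using tendsto_one_div_add_atTop_nhds_zero_nat (𝕜 := ℝ)
        simpa using h0.mul_const (1 + D)
      have hsq0 : Filter.Tendsto (fun k : ℕ => Real.sqrt ((((k:ℝ) + 1)⁻¹) * (1 + D)))
          Filter.atTop (nhds 0) := by
        have := (Real.continuous_sqrt.tendsto 0).comp ht0
        simpa [Function.comp_def] using this
      have hd0 : Filter.Tendsto (fun k => dist (P (mval a b z (cs k))) yh)
          Filter.atTop (nhds 0) := by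
        rw [← tendsto_iff_dist_tendsto_zero]
        exact hyh
      simpa using (hsq0.const_mul 2).add hd0
    exact squeeze_zero (fun k => dist_nonneg) hb1 hb2
  have hcont : Continuous (hval a b z s) := by
    have h1 : Continuous fun y : H => ‖y - b s‖ ^ 2 :=
      (continuous_id.sub continuous_const).norm.pow 2
    have h2 : Continuous fun y : H => ⟪z - a s, y - b s⟫ :=
      Continuous.inner continuous_const (continuous_id.sub continuous_const)
    exact h1.sub h2
  have hlim2 : Filter.Tendsto (fun k => hval a b z s (P (mval a b z (ν k))))
      Filter.atTop (nhds (hval a b z s yh)) :=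
    (hcont.tendsto yh).comp hulim
  have hlim3 : Filter.Tendsto (fun k : ℕ => M + (((k:ℝ) + 1)⁻¹))
      Filter.atTop (nhds M) := by
    have h0 : Filter.Tendsto (fun N : ℕ => (((N:ℝ) + 1)⁻¹)) Filter.atTop (nhds 0) := by
      simpa [one_div] using tendsto_one_div_add_atTop_nhds_zero_nat (𝕜 := ℝ)
    simpa using (tendsto_const_nhds (x := M)).add h0
  have hfin : hval a b z s yh ≤ M :=
    le_of_tendsto_of_tendsto' hlim2 hlim3 hup
  have : hval a b z s yh ≤ 0 := le_trans hfin hMle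
  rw [hval] at this
  linarith

/-- Global firmly-nonexpansive extension with range in a prescribed closed convex set. -/
theorem extendFirm {ι : Type*} [Nonempty ι] (x g : ι → H)
    (K : Set H) (hKc : IsClosed K) (hKconv : Convex ℝ K) (hgK : ∀ i, g i ∈ K)
    (hfirm : ∀ i j, ‖g i - g j‖ ^ 2 ≤ ⟪x i - x j, g i - g j⟫) :
    ∃ G : H → H, (∀ z w, ‖G z - G w‖ ^ 2 ≤ ⟪z - w, G z - G w⟫) ∧ (∀ i, G (x i) = g i)
      ∧ ∀ z, G z ∈ K := by
  classical
  set S : Set (Set (H × H)) := {R | (∀ p ∈ R, Prod.snd p ∈ K) ∧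
    (∀ p ∈ R, ∀ q ∈ R, ‖Prod.snd p - Prod.snd q‖ ^ 2
      ≤ ⟪Prod.fst p - Prod.fst q, Prod.snd p - Prod.snd q⟫)} with hS
  have hR0 : (Set.range fun i => (x i, g i)) ∈ S := by
    constructor
    · rintro p ⟨i, rfl⟩; exact hgK i
    · rintro p ⟨i, rfl⟩ q ⟨j, rfl⟩; exact hfirm i j
  have hchain : ∀ c ⊆ S, IsChain (· ⊆ ·) c → c.Nonempty → ∃ ub ∈ S, ∀ s ∈ c, s ⊆ ub := by
    intro c hcS hch _
    refine ⟨⋃₀ c, ⟨?_, ?_⟩, fun s hs => Set.subset_sUnion_of_mem hs⟩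
    · rintro p ⟨R, hRc, hpR⟩; exact (hcS hRc).1 p hpR
    · rintro p ⟨R, hRc, hpR⟩ q ⟨R', hR'c, hqR'⟩
      rcases hch.total hRc hR'c with h | h
      · exact (hcS hR'c).2 p (h hpR) q hqR'
      · exact (hcS hRc).2 p hpR q (h hqR')
  obtain ⟨R, hsub, hmax⟩ := zorn_subset_nonempty S hchain _ hR0
  have hRS : R ∈ S := hmax.prop
  haveI : Nonempty R := ⟨⟨(x (Classical.arbitrary ι), g (Classical.arbitrary ι)),
    hsub ⟨Classical.arbitrary ι, rfl⟩⟩⟩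
  have htot : ∀ z : H, ∃ q, (z, q) ∈ R := by
    intro z
    obtain ⟨y, hyK, hy⟩ := onePoint (σ := R) (fun p => p.1.1) (fun p => p.1.2) z K hKc hKconv
      (fun p => hRS.1 p.1 p.2) (fun p q => hRS.2 p.1 p.2 q.1 q.2)
    by_contra hno
    push_neg at hno
    have hsymm : ∀ q ∈ R, ‖Prod.snd q - y‖ ^ 2 ≤ ⟪Prod.fst q - z, Prod.snd q - y⟫ := by
      intro q hq
      have h := hy ⟨q, hq⟩
      have h2 : ‖Prod.snd q - y‖ ^ 2 = ‖y - Prod.snd q‖ ^ 2 := by rw [norm_sub_rev]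
      have h3 : ⟪Prod.fst q - z, Prod.snd q - y⟫ = ⟪z - Prod.fst q, y - Prod.snd q⟫ := by
        rw [← neg_sub z (Prod.fst q), ← neg_sub y (Prod.snd q), inner_neg_neg]
      rw [h2, h3]
      exact h
    have hmem : insert (z, y) R ∈ S := by
      constructor
      · rintro p (rfl | hp)
        · exact hyK
        · exact hRS.1 p hp
      · rintro p (rfl | hp) q (rfl | hq)
        · simp
        · exact hy ⟨q, hq⟩
        · exact hsymm p hp
        · exact hRS.2 p hp q hq
    have hR'R : insert (z, y) R ⊆ R := hmax.2 hmem (Set.subset_insert _ _)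
    exact hno y (hR'R (Set.mem_insert _ _))
  choose G hG using htot
  refine ⟨G, fun z w => hRS.2 _ (hG z) _ (hG w), fun i => ?_, fun z => hRS.1 _ (hG z)⟩
  have h1 : (x i, g i) ∈ R := hsub ⟨i, rfl⟩
  have h2 := hRS.2 _ (hG (x i)) _ h1
  have h3 : ‖G (x i) - g i‖ ^ 2 ≤ 0 := by simpa using h2
  have h4 : ‖G (x i) - g i‖ = 0 := by nlinarith [norm_nonneg (G (x i) - g i)]
  have h5 : G (x i) - g i = 0 := norm_eq_zero.1 h4
  exact sub_eq_zero.1 h5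

private lemma firm_of_nexp (p q : H) (h : ‖q‖ ≤ ‖p‖) :
    ‖(2⁻¹:ℝ) • (p - q)‖ ^ 2 ≤ ⟪p, (2⁻¹:ℝ) • (p - q)⟫ := by
  have h2 : ‖q‖ ^ 2 ≤ ‖p‖ ^ 2 := by nlinarith [norm_nonneg q, norm_nonneg p]
  simp only [← real_inner_self_eq_norm_sq, inner_sub_left, inner_sub_right,
    real_inner_smul_left, real_inner_smul_right, real_inner_comm] at h2 ⊢
  nlinarith [h2]

end NExtAux

def Nonexpansive {H : Type*} [NormedAddCommGroup H] (T : H → H) : Prop :=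
  ∀ x y, ‖T x - T y‖ ≤ ‖x - y‖

/-- Interpolability with a prescribed infimal displacement vector: data satisfying the
nonexpansiveness inequalities, with `v = x_⋆ - y_⋆` and `⟨x_i - y_i, v⟩ ≥ ‖v‖²` for all `i`,
can be interpolated by a nonexpansive operator on all of `H` whose infimal displacement
vector (the minimal-norm element of `cl(ran(I - T̃))`) is `v`. -/
theorem nonexpansive_interpolation_with_idv
    {H : Type*} [NormedAddCommGroup H] [InnerProductSpace ℝ H] [CompleteSpace H]
    {ι : Type*} (x y : ι → H)
    (hne : ∀ i j, ‖y i - y j‖ ≤ ‖x i - x j‖)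
    (star : ι) (v : H) (hv : v = x star - y star)
    (hproj : ∀ i, ⟪x i - y i, v⟫ ≥ ‖v‖ ^ 2) :
    ∃ T : H → H, Nonexpansive T ∧ (∀ i, T (x i) = y i) ∧
      v ∈ closure (Set.range fun z => z - T z) ∧
      ∀ w ∈ closure (Set.range fun z => z - T z), ‖v‖ ≤ ‖w‖ := by
  classical
  haveI : Nonempty ι := ⟨star⟩
  set g : ι → H := fun i => (2⁻¹ : ℝ) • (x i - y i - v) with hg
  have hfirm : ∀ i j, ‖g i - g j‖ ^ 2 ≤ ⟪x i - x j, g i - g j⟫ := by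
    intro i j
    have hdiff : g i - g j = (2⁻¹ : ℝ) • ((x i - x j) - (y i - y j)) := by
      simp only [hg]; module
    rw [hdiff]
    exact NExtAux.firm_of_nexp (x i - x j) (y i - y j) (hne i j)
  set K : Set H := closure (convexHull ℝ (Set.range g)) with hK
  have hKc : IsClosed K := isClosed_closure
  have hKconv : Convex ℝ K := (convex_convexHull ℝ _).closure
  have hgK : ∀ i, g i ∈ K := fun i => subset_closure (subset_convexHull ℝ _ ⟨i, rfl⟩)
  obtain ⟨G, hGfirm, hGint, hGK⟩ := NExtAux.extendFirm x g K hKc hKconv hgK hfirm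
  have hKhalf : ∀ u ∈ K, 0 ≤ ⟪u, v⟫ := by
    have hcl : IsClosed {u : H | 0 ≤ ⟪u, v⟫} :=
      isClosed_le continuous_const (Continuous.inner continuous_id continuous_const)
    have hcv : Convex ℝ {u : H | 0 ≤ ⟪u, v⟫} := by
      intro p hp q hq a b ha hb hab
      have : ⟪a • p + b • q, v⟫ = a * ⟪p, v⟫ + b * ⟪q, v⟫ := by
        simp [inner_add_left, real_inner_smul_left]
      simp only [Set.mem_setOf_eq] at hp hq ⊢
      rw [this]
      have := mul_nonneg ha hp
      have := mul_nonneg hb hq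
      linarith
    have hsub0 : Set.range g ⊆ {u : H | 0 ≤ ⟪u, v⟫} := by
      rintro _ ⟨i, rfl⟩
      have h1 : ⟪g i, v⟫ = 2⁻¹ * (⟪x i - y i, v⟫ - ‖v‖ ^ 2) := by
        simp only [hg]
        rw [show x i - y i - v = (x i - y i) - v from rfl]
        rw [real_inner_smul_left, inner_sub_left, real_inner_self_eq_norm_sq]
      have h2 := hproj i
      simp only [Set.mem_setOf_eq, h1]
      linarith
    intro u hu
    exact closure_minimal ((convexHull_min hsub0 hcv)) hcl hu
  refine ⟨fun w => w - v - (2:ℝ) • G w, ?_, ?_, ?_, ?_⟩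
  · intro p q
    have h := hGfirm p q
    have he : (p - v - (2:ℝ) • G p) - (q - v - (2:ℝ) • G q)
        = -((2:ℝ) • (G p - G q) - (p - q)) := by module
    rw [he, norm_neg]
    exact NExtAux.nexp_sq _ _ h
  · intro i
    show x i - v - (2:ℝ) • G (x i) = y i
    have h2 : (2:ℝ) • g i = x i - y i - v := by
      simp only [hg, smul_smul]; norm_num
    rw [hGint i, h2]
    module
  · apply subset_closure
    refine ⟨x star, ?_⟩
    show x star - (x star - v - (2:ℝ) • G (x star)) = v
    rw [hGint star]
    have h2 : (2:ℝ) • g star = x star - y star - v := by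
      simp only [hg, smul_smul]; norm_num
    rw [h2, hv]
    module
  · have hdisp : ∀ z : H, ‖v‖ ^ 2 ≤ ⟪z - (z - v - (2:ℝ) • G z), v⟫ := by
      intro z
      have he : z - (z - v - (2:ℝ) • G z) = v + (2:ℝ) • G z := by module
      rw [he, inner_add_left, real_inner_smul_left, real_inner_self_eq_norm_sq]
      have := hKhalf (G z) (hGK z)
      linarith
    have hcl : IsClosed {w : H | ‖v‖ ^ 2 ≤ ⟪w, v⟫} :=
      isClosed_le continuous_const (Continuous.inner continuous_id continuous_const)
    have hsub : closure (Set.range fun z => z - (z - v - (2:ℝ) • G z))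
        ⊆ {w : H | ‖v‖ ^ 2 ≤ ⟪w, v⟫} := by
      apply closure_minimal _ hcl
      rintro _ ⟨z, rfl⟩
      exact hdisp z
    intro w hw
    have h1 : ‖v‖ ^ 2 ≤ ⟪w, v⟫ := hsub hw
    have h2 : ⟪w, v⟫ ≤ ‖w‖ * ‖v‖ := real_inner_le_norm w v
    rcases eq_or_lt_of_le (norm_nonneg v) with h | h
    · rw [← h]; exact norm_nonneg w
    · nlinarith [h1, h2]
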